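/- The function z ↦ |sin(z)/z|^p is integrable on ℝ for every p > 1, but not integrable for p = 1. -/

import Mathlib

open MeasureTheory Real Filter Set

lemma sinc_abs_le_one (z : ℝ) : |Real.sin z / z| ≤ 1 := by
  rcases eq_or_ne z 0 with rfl | hz
  · simp
  · rw [abs_div]
    rw [div_le_one (abs_pos.mpr hz)]
    exact Real.abs_sin_le_abs

lemma sinc_pow_integrable {p : ℝ} (hp : 1 < p) :
    Integrable (fun z : ℝ => |Real.sin z / z| ^ p) := by
  have hp0 : 0 ≤ p := by linarith
  set g : ℝ → ℝ := fun z => |Real.sin z / z| ^ p with hg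
  have hgm : Measurable g :=
    (Real.continuous_rpow_const hp0).measurable.comp
      ((Real.measurable_sin.div measurable_id).abs)
  have hgle : ∀ z, g z ≤ 1 := fun z =>
    Real.rpow_le_one (abs_nonneg _) (sinc_abs_le_one z) hp0
  have hgnn : ∀ z, 0 ≤ g z := fun z => Real.rpow_nonneg (abs_nonneg _) p
  have hloc : LocallyIntegrable g := by
    intro x
    refine ⟨Icc (x - 1) (x + 1), Icc_mem_nhds (by linarith) (by linarith), ?_⟩
    refine Integrable.mono (g := fun _ : ℝ => (1:ℝ)) ((integrableOn_const_iff).mpr (Or.inr (by simp)))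
      (hgm.aestronglyMeasurable.restrict) ?_
    filter_upwards with z
    rw [Real.norm_eq_abs, abs_of_nonneg (hgnn z)]
    exact (hgle z).trans (by norm_num)
  refine hloc.integrable_of_isBigO_atTop_of_norm_isNegInvariant ?_
    (g := fun x : ℝ => x ^ (-p)) ?_ ⟨Ioi 1, Ioi_mem_atTop 1,
      integrableOn_Ioi_rpow_of_lt (by linarith) one_pos⟩
  · refine Filter.EventuallyEq.of_eq (funext fun x => ?_)
    simp [hg, Function.comp, Real.sin_neg, neg_div_neg_eq]
  · rw [Asymptotics.isBigO_iff]
    refine ⟨1, ?_⟩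
    filter_upwards [Filter.eventually_ge_atTop (1 : ℝ)] with x hx
    have hx0 : 0 < x := by linarith
    have h1 : |Real.sin x / x| ≤ x⁻¹ := by
      rw [abs_div, abs_of_pos hx0, div_le_iff₀ hx0, inv_mul_cancel₀ hx0.ne']
      exact Real.abs_sin_le_one x
    have h2 : g x ≤ x ^ (-p) := by
      rw [Real.rpow_neg hx0.le, ← Real.inv_rpow hx0.le]
      exact Real.rpow_le_rpow (abs_nonneg _) h1 hp0
    rw [Real.norm_eq_abs, Real.norm_eq_abs, abs_of_nonneg (hgnn x),
      abs_of_nonneg (Real.rpow_nonneg hx0.le _), one_mul]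
    exact h2

lemma abs_sin_periodic : Function.Periodic (fun x : ℝ => |Real.sin x|) π := by
  intro x
  simp [Real.sin_antiperiodic x]

lemma integral_abs_sin_period (a : ℝ) :
    ∫ x in a..(a + π), |Real.sin x| = 2 := by
  rw [abs_sin_periodic.intervalIntegral_add_eq a 0, zero_add]
  rw [intervalIntegral.integral_congr (g := Real.sin) ?_]
  · rw [integral_sin]; norm_num
  · intro x hx
    rw [Set.uIcc_of_le Real.pi_pos.le] at hx
    exact abs_of_nonneg (Real.sin_nonneg_of_nonneg_of_le_pi hx.1 hx.2)

lemma sinc_not_integrable : ¬ Integrable (fun z : ℝ => |Real.sin z / z|) := by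
  intro hInt
  set f : ℝ → ℝ := fun z => |Real.sin z / z| with hf
  have hfnn : ∀ z, 0 ≤ f z := fun z => abs_nonneg _
  set C : ℝ := ∫ z, f z with hC
  have hI : ∀ k : ℕ, 2 / ((k + 1) * π) ≤ ∫ x in ((k : ℝ) * π)..(((k : ℝ) + 1) * π), f x := by
    intro k
    have hkpos : (0:ℝ) < ((k : ℝ) + 1) * π := by positivity
    have h2 : ∫ x in ((k : ℝ) * π)..(((k : ℝ) + 1) * π), |Real.sin x| = 2 := by
      have heq : ((k:ℝ) + 1) * π = (k : ℝ) * π + π := by ring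
      rw [heq, integral_abs_sin_period]
    have hmono : (∫ x in ((k : ℝ) * π)..(((k : ℝ) + 1) * π), |Real.sin x| / (((k : ℝ) + 1) * π))
        ≤ ∫ x in ((k : ℝ) * π)..(((k : ℝ) + 1) * π), f x := by
      refine intervalIntegral.integral_mono_on ?_ ?_ hInt.intervalIntegrable ?_
      · nlinarith [Real.pi_pos]
      · exact ((continuous_abs.comp Real.continuous_sin).div_const _).intervalIntegrable _ _
      · intro x hx
        rcases eq_or_ne x 0 with rfl | hx0
        · simp [hf]
        · have hx1 : 0 < x := lt_of_le_of_ne (le_trans (by positivity) hx.1) (Ne.symm hx0)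
          have hxle : x ≤ ((k : ℝ) + 1) * π := hx.2
          show |Real.sin x| / (((k : ℝ) + 1) * π) ≤ |Real.sin x / x|
          rw [abs_div, abs_of_pos hx1]
          exact div_le_div_of_nonneg_left (abs_nonneg _) hx1 hxle
    rw [intervalIntegral.integral_div, h2] at hmono
    exact hmono
  have hsum : ∀ n : ℕ, ∑ k ∈ Finset.range n, 2 / ((k + 1) * π) ≤ C := by
    intro n
    have hadj := intervalIntegral.sum_integral_adjacent_intervals
      (a := fun k : ℕ => (k : ℝ) * π) (n := n) (μ := volume) (f := f)
      (fun k _ => hInt.intervalIntegrable)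
    try simp only [] at hadj
    have h1 : ∑ k ∈ Finset.range n, 2 / ((k + 1) * π)
        ≤ ∑ k ∈ Finset.range n, ∫ x in ((k : ℝ) * π)..((((k : ℕ) + 1 : ℕ) : ℝ) * π), f x := by
      refine Finset.sum_le_sum fun k _ => ?_
      have := hI k
      push_cast
      convert this using 3
    refine h1.trans ?_
    rw [hadj]
    have h0 : ((0 : ℕ) : ℝ) * π = 0 := by norm_num
    have h0n : ((0 : ℕ) : ℝ) * π ≤ (n : ℝ) * π := by rw [h0]; positivity
    rw [intervalIntegral.integral_of_le h0n]
    exact setIntegral_le_integral hInt (Filter.Eventually.of_forall hfnn)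
  have htend : Tendsto (fun n : ℕ => ∑ k ∈ Finset.range n, 2 / ((k + 1) * π)) atTop atTop := by
    have h := Real.tendsto_sum_range_one_div_nat_succ_atTop
    have h2 := Tendsto.const_mul_atTop (by positivity : (0:ℝ) < 2 / π) h
    refine h2.congr fun n => ?_
    rw [Finset.mul_sum]
    refine Finset.sum_congr rfl fun k _ => ?_
    rw [div_mul_eq_mul_div, mul_one_div, div_div]
  obtain ⟨n, hn⟩ := (htend.eventually_gt_atTop C).exists
  exact absurd (hsum n) (not_le.mpr hn)

/-- `z ↦ |sin z / z|^p` is integrable on `ℝ` for every `p > 1`,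
but not integrable for `p = 1`. -/
theorem sinc_pow_integrable_iff :
    (∀ p : ℝ, 1 < p → Integrable (fun z : ℝ => |Real.sin z / z| ^ p)) ∧
    ¬ Integrable (fun z : ℝ => |Real.sin z / z|) := by
  exact ⟨fun p hp => sinc_pow_integrable hp, sinc_not_integrable⟩
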